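/- Let 𝒳* be the set of inclusion-wise maximal members of 𝒳 and 𝒴* the set of inclusion-wise minimal members of 𝒴. A directed full component K with centre v and sink u is feasible with respect to (x,y) if and only if (a) x_a > 0 for every arc a of K, (b) every source of K lies in 𝒞, (c) K has at most one source in each member of 𝒳*, and (d) K has at least one source in each member of 𝒴*. -/

import Mathlib

open Classical

noncomputable section

variable {V : Type*} [Fintype V] [DecidableEq V]

/-- A directed full component of a Steiner tree instance `(G, R)`: a subtree `H` of `G`
whose leaves are exactly the terminals it contains (internal vertices are Steiner
vertices), together with an orientation of all its edges towards a chosen terminal,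
the sink.  The orientation is recorded by the arc set `arcs`, oriented towards the
sink, i.e. every non-sink vertex has exactly one outgoing arc and the sink has none. -/
structure DirFullComp (G : SimpleGraph V) (R : Set V) where
  H : G.Subgraph
  nonempty : H.verts.Nonempty
  isTree : H.coe.IsTree
  leaf_iff : ∀ v ∈ H.verts, (v ∈ R ↔ (H.neighborSet v).ncard = 1)
  sink : V
  sink_mem : sink ∈ H.verts
  sink_terminal : sink ∈ R
  arcs : Finset (V × V)
  arcs_adj : ∀ a ∈ arcs, H.Adj a.1 a.2
  arcs_total : ∀ u v : V, H.Adj u v → (u, v) ∈ arcs ∨ (v, u) ∈ arcs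
  arcs_antisymm : ∀ u v : V, (u, v) ∈ arcs → (v, u) ∉ arcs
  toward_sink : ∀ v ∈ H.verts, v ≠ sink → ∃! w : V, (v, w) ∈ arcs
  sink_no_out : ∀ w : V, (sink, w) ∉ arcs

namespace DirFullComp

variable {G : SimpleGraph V} {R : Set V}

/-- The sources of a directed full component: its terminals other than the sink. -/
def sources (K : DirFullComp G R) : Set V := (K.H.verts ∩ R) \ {K.sink}

/-- `K` crosses `U` iff its sink lies outside `U` and some source lies in `U`. -/
def crosses (K : DirFullComp G R) (U : Set V) : Prop :=
  K.sink ∉ U ∧ (K.sources ∩ U).Nonempty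

/-- `Δ_K⁺(U) ∈ {0,1}`. -/
def cross01 (K : DirFullComp G R) (U : Set V) : ℝ := if K.crosses U then 1 else 0

/-- Characteristic vector `χ_K ∈ ℝ^A` of the arc set of `K`. -/
def chi (K : DirFullComp G R) : V × V → ℝ := fun a => if a ∈ K.arcs then 1 else 0

/-- Cost `c_K` of the component w.r.t. arc costs `c`. -/
def cost (K : DirFullComp G R) (c : V → V → ℝ) : ℝ := ∑ a ∈ K.arcs, c a.1 a.2

/-- In a quasi-bipartite instance without terminal-terminal edges, every full
component has a unique Steiner vertex, its centre. -/
def IsCentre (K : DirFullComp G R) (v : V) : Prop := K.H.verts \ R = {v}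

end DirFullComp

instance (G : SimpleGraph V) : Finite G.Subgraph := by
  apply Finite.of_injective (fun H => (H.verts, H.Adj))
  intro H₁ H₂ h
  cases H₁; cases H₂
  simp only [Prod.mk.injEq] at h
  obtain ⟨h1, h2⟩ := h
  subst h1; subst h2; rfl

instance (G : SimpleGraph V) (R : Set V) : Finite (DirFullComp G R) := by
  apply Finite.of_injective (fun K : DirFullComp G R => (K.H, K.sink, K.arcs))
  intro K₁ K₂ h
  cases K₁; cases K₂
  simp only [Prod.mk.injEq] at h
  obtain ⟨h1, h2, h3⟩ := h
  subst h1; subst h2; subst h3; rfl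
/-- The arc set `A` of the bidirected digraph `D` obtained from `G`. -/
def arcSet (G : SimpleGraph V) : Set (V × V) := {a | G.Adj a.1 a.2}

/-- `δ⁺(U)`: arcs of `D` with tail in `U` and head outside `U`. -/
def outArcs (G : SimpleGraph V) (U : Set V) : Set (V × V) :=
  {a | G.Adj a.1 a.2 ∧ a.1 ∈ U ∧ a.2 ∉ U}

/-- `x(δ⁺(U))`. -/
def cutx (G : SimpleGraph V) (x : V × V → ℝ) (U : Set V) : ℝ :=
  ∑ᶠ a ∈ outArcs G U, x a

/-- `y(Δ⁺(U))`: total `y`-weight of directed full components crossing `U`. -/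
def cuty (G : SimpleGraph V) (R : Set V) (y : DirFullComp G R → ℝ) (U : Set V) : ℝ :=
  ∑ᶠ K ∈ {K : DirFullComp G R | K.crosses U}, y K

/-- A set is valid if it contains a terminal but not the root. -/
def Valid (R : Set V) (r : V) (U : Set V) : Prop := (U ∩ R).Nonempty ∧ r ∉ U

/-- Quasi-bipartite: no edge joins two Steiner vertices. -/
def QuasiBipartite (G : SimpleGraph V) (R : Set V) : Prop :=
  ∀ u v : V, G.Adj u v → u ∈ R ∨ v ∈ R

/-- No edge joins two terminals. -/
def NoTerminalEdges (G : SimpleGraph V) (R : Set V) : Prop :=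
  ∀ u v : V, G.Adj u v → u ∉ R ∨ v ∉ R

/-- Intersecting supermodular function on subsets of `R`. -/
def IntersectingSupermodular (R : Set V) (f : Set V → ℝ) : Prop :=
  ∀ A B : Set V, A ⊆ R → B ⊆ R → (A ∩ B).Nonempty →
    f A + f B ≤ f (A ∩ B) + f (A ∪ B)

/-- Feasibility for (BCR_f). -/
def BCRfFeasible (G : SimpleGraph V) (R : Set V) (r : V) (f : Set V → ℝ)
    (x : V × V → ℝ) : Prop :=
  (∀ a, 0 ≤ x a) ∧ ∀ U : Set V, Valid R r U → f (U ∩ R) ≤ cutx G x U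

/-- Feasibility for (DCR_f). -/
def DCRfFeasible (G : SimpleGraph V) (R : Set V) (r : V) (f : Set V → ℝ)
    (y : DirFullComp G R → ℝ) : Prop :=
  (∀ K, 0 ≤ y K) ∧ ∀ U : Set V, U.Nonempty → U ⊆ R \ {r} → f U ≤ cuty G R y U

/-- Feasibility for (BCR). -/
def BCRFeasible (G : SimpleGraph V) (R : Set V) (r : V) (x : V × V → ℝ) : Prop :=
  BCRfFeasible G R r (fun _ => 1) x

/-- Feasibility for (DCR). -/
def DCRFeasible (G : SimpleGraph V) (R : Set V) (r : V) (y : DirFullComp G R → ℝ) : Prop :=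
  DCRfFeasible G R r (fun _ => 1) y

/-- The (BCR) objective `∑_{a ∈ A} c_a x_a`. -/
def BCRCost (G : SimpleGraph V) (c : V → V → ℝ) (x : V × V → ℝ) : ℝ :=
  ∑ᶠ a ∈ arcSet G, c a.1 a.2 * x a

/-- The (DCR) objective `∑_{K ∈ 𝒦} c_K y_K`. -/
def DCRCost (G : SimpleGraph V) (R : Set V) (c : V → V → ℝ)
    (y : DirFullComp G R → ℝ) : ℝ :=
  ∑ᶠ K : DirFullComp G R, K.cost c * y K

/-- The linear map `Φ(y) = ∑_K y_K · χ_K`. -/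
def Phi (G : SimpleGraph V) (R : Set V) (y : DirFullComp G R → ℝ) : V × V → ℝ :=
  fun a => ∑ᶠ K : DirFullComp G R, y K * K.chi a

/-- A minimal feasible solution of (BCR_f): feasible, and decreasing any single
coordinate by any positive amount destroys feasibility. -/
def BCRfMinimal (G : SimpleGraph V) (R : Set V) (r : V) (f : Set V → ℝ)
    (x : V × V → ℝ) : Prop :=
  BCRfFeasible G R r f x ∧
    ∀ a : V × V, ∀ ε : ℝ, 0 < ε →
      ¬ BCRfFeasible G R r f (Function.update x a (x a - ε))

/-- A minimal feasible solution of (BCR). -/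
def BCRMinimal (G : SimpleGraph V) (R : Set V) (r : V) (x : V × V → ℝ) : Prop :=
  BCRfMinimal G R r (fun _ => 1) x

/-- Membership in the polyhedron `𝓘`. -/
def memI (G : SimpleGraph V) (R : Set V) (r : V) (x : V × V → ℝ)
    (y : DirFullComp G R → ℝ) : Prop :=
  (∀ a, 0 ≤ x a) ∧ (∀ K, 0 ≤ y K) ∧
    ∀ U : Set V, Valid R r U → 1 ≤ cutx G x U + cuty G R y U

/-- A valid set that is tight for `(x, y) ∈ 𝓘`. -/
def TightFor (G : SimpleGraph V) (R : Set V) (r : V) (x : V × V → ℝ)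
    (y : DirFullComp G R → ℝ) (U : Set V) : Prop :=
  Valid R r U ∧ cutx G x U + cuty G R y U = 1

/-- A directed full component `K` is feasible w.r.t. `(x, y) ∈ 𝓘` if some positive
weight can be shifted from the arcs of `K` onto `K` while staying in `𝓘`. -/
def FeasibleComp (G : SimpleGraph V) (R : Set V) (r : V) (x : V × V → ℝ)
    (y : DirFullComp G R → ℝ) (K : DirFullComp G R) : Prop :=
  ∃ lam : ℝ, 0 < lam ∧
    memI G R r (x - lam • K.chi) (y + lam • (Pi.single K 1 : DirFullComp G R → ℝ))

/-- The set `𝒞` of eligible source nodes for centre `v` and sink `u`. -/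
def Cset (G : SimpleGraph V) (R : Set V) (r : V) (x : V × V → ℝ)
    (y : DirFullComp G R → ℝ) (v u : V) : Set V :=
  {w | G.Adj v w ∧ w ≠ u ∧
    ¬ ∃ U : Set V, TightFor G R r x y U ∧ u ∈ U ∧ w ∈ U ∧ v ∉ U}

/-- The family `𝒳`. -/
def Xfam (G : SimpleGraph V) (R : Set V) (r : V) (x : V × V → ℝ)
    (y : DirFullComp G R → ℝ) (v u : V) : Set (Set V) :=
  {S | ∃ X : Set V, TightFor G R r x y X ∧ u ∉ X ∧ v ∉ X ∧
    S = X ∩ Cset G R r x y v u}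

/-- The family `𝒴`. -/
def Yfam (G : SimpleGraph V) (R : Set V) (r : V) (x : V × V → ℝ)
    (y : DirFullComp G R → ℝ) (v u : V) : Set (Set V) :=
  {S | ∃ Y : Set V, TightFor G R r x y Y ∧ v ∈ Y ∧ u ∉ Y ∧
    S = Y ∩ Cset G R r x y v u}

/-- `𝒳*`: inclusion-wise maximal members of `𝒳`. -/
def XStar (G : SimpleGraph V) (R : Set V) (r : V) (x : V × V → ℝ)
    (y : DirFullComp G R → ℝ) (v u : V) : Set (Set V) :=
  {X ∈ Xfam G R r x y v u | ∀ X' ∈ Xfam G R r x y v u, X ⊆ X' → X' = X}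

/-- `𝒴*`: inclusion-wise minimal members of `𝒴`. -/
def YStar (G : SimpleGraph V) (R : Set V) (r : V) (x : V × V → ℝ)
    (y : DirFullComp G R → ℝ) (v u : V) : Set (Set V) :=
  {Y ∈ Yfam G R r x y v u | ∀ Y' ∈ Yfam G R r x y v u, Y' ⊆ Y → Y' = Y}

/-- The index set of the dual (DCR_f^D): nonempty subsets of `R ∖ {r}`. -/
def dualIndex (R : Set V) (r : V) : Set (Set V) :=
  {U : Set V | U.Nonempty ∧ U ⊆ R \ {r}}

/-- Feasibility for the dual (DCR_f^D). -/
def DualFeasible (G : SimpleGraph V) (R : Set V) (r : V) (c : V → V → ℝ)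
    (z : Set V → ℝ) : Prop :=
  (∀ U, 0 ≤ z U) ∧ (∀ U : Set V, U ∉ dualIndex R r → z U = 0) ∧
    ∀ K : DirFullComp G R,
      ∑ᶠ U ∈ dualIndex R r, K.cross01 U * z U ≤ K.cost c

/-- Objective `f^T z` of the dual (DCR_f^D). -/
def DualObj (R : Set V) (r : V) (f : Set V → ℝ) (z : Set V → ℝ) : ℝ :=
  ∑ᶠ U ∈ dualIndex R r, f U * z U

section StructLemmas
variable {G : SimpleGraph V} {R : Set V}

lemma arcs_char (hnt : NoTerminalEdges G R) (K : DirFullComp G R) {v u : V}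
    (hK : K.IsCentre v) (hv : v ∉ R) (hu : u ∈ R) (hsink : K.sink = u) :
    ∀ a b : V, ((a, b) ∈ K.arcs ↔ (a ∈ K.sources ∧ b = v) ∨ (a = v ∧ b = u)) := by
  have hvu : v ≠ u := fun h => hv (h ▸ hu)
  have hvmem : v ∈ K.H.verts := by
    have : v ∈ K.H.verts \ R := hK ▸ rfl
    exact this.1
  have hmemR : ∀ w ∈ K.H.verts, w ≠ v → w ∈ R := by
    intro w hw hwv
    by_contra hwR
    exact hwv (by simpa using (hK ▸ (Set.mem_diff w).2 ⟨hw, hwR⟩ : w ∈ ({v} : Set V)))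
  have adjA : ∀ a b : V, K.H.Adj a b → (a = v ∧ b ∈ R ∧ b ≠ v) ∨ (b = v ∧ a ∈ R ∧ a ≠ v) := by
    intro a b hab
    have haV := hab.fst_mem
    have hbV := hab.snd_mem
    have hne : a ≠ b := hab.adj_sub.ne
    rcases hnt a b hab.adj_sub with h | h
    · have ha : a = v := by_contra fun hav => h (hmemR a haV hav)
      have hbv : b ≠ v := fun hb => hne (ha.trans hb.symm)
      exact Or.inl ⟨ha, hmemR b hbV hbv, hbv⟩
    · have hb : b = v := by_contra fun hbv => h (hmemR b hbV hbv)
      have hav : a ≠ v := fun ha => hne (ha.trans hb.symm)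
      exact Or.inr ⟨hb, hmemR a haV hav, hav⟩
  have source_arc : ∀ w ∈ K.H.verts, w ≠ v → w ≠ u → (w, v) ∈ K.arcs := by
    intro w hw hwv hwu
    obtain ⟨z, hz, huniq⟩ := K.toward_sink w hw (hsink ▸ hwu)
    have hadjz := K.arcs_adj _ hz
    rcases adjA w z hadjz with ⟨h1, _⟩ | ⟨h1, _⟩
    · exact absurd h1 hwv
    · exact h1 ▸ hz
  have varc : (v, u) ∈ K.arcs ∧ ∀ b : V, (v, b) ∈ K.arcs → b = u := by
    obtain ⟨z, hz, huniq⟩ := K.toward_sink v hvmem (hsink ▸ hvu)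
    have hadjz := K.arcs_adj _ hz
    have hzu : z = u := by
      rcases adjA v z hadjz with ⟨_, hzR, hzv⟩ | ⟨h1, _, hvv⟩
      · by_contra hzu
        have : (z, v) ∈ K.arcs := source_arc z hadjz.snd_mem hzv hzu
        exact K.arcs_antisymm z v this hz
      · exact absurd rfl hvv
    refine ⟨hzu ▸ hz, fun b hb => ?_⟩
    exact hzu ▸ huniq b hb
  intro a b
  constructor
  · intro hab
    have hadjab := K.arcs_adj _ hab
    rcases adjA a b hadjab with ⟨ha, _, _⟩ | ⟨hb, haR, hav⟩
    · exact Or.inr ⟨ha, varc.2 b (ha ▸ hab)⟩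
    · left
      refine ⟨⟨⟨hadjab.fst_mem, haR⟩, ?_⟩, hb⟩
      simp only [Set.mem_singleton_iff, hsink]
      rintro rfl
      exact K.sink_no_out v (hsink ▸ hb ▸ hab)
  · rintro (⟨hs, hb⟩ | ⟨ha, hb⟩)
    · obtain ⟨⟨haV, haR⟩, hau⟩ := hs
      have hav : a ≠ v := fun h => hv (h ▸ haR)
      rw [hb]
      exact source_arc a haV hav (fun h => hau (by simp [hsink, h]))
    · rw [ha, hb]; exact varc.1



set_option linter.unusedSectionVars false

lemma sources_adj (hnt : NoTerminalEdges G R) (K : DirFullComp G R) {v u : V}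
    (hK : K.IsCentre v) (hv : v ∉ R) (hu : u ∈ R) (hsink : K.sink = u) :
    ∀ w ∈ K.sources, G.Adj v w ∧ w ≠ u ∧ w ≠ v := by
  intro w hw
  have harc : (w, v) ∈ K.arcs :=
    (arcs_char hnt K hK hv hu hsink w v).2 (Or.inl ⟨hw, rfl⟩)
  have hadj : G.Adj v w := (K.arcs_adj _ harc).adj_sub.symm
  refine ⟨hadj, ?_, hadj.ne'⟩
  have := hw.2
  simp only [Set.mem_singleton_iff, hsink] at this
  exact this

lemma cutx_sub_smul (G : SimpleGraph V) (x : V × V → ℝ) (K : DirFullComp G R)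
    (lam : ℝ) (U : Set V) :
    cutx G (x - lam • K.chi) U
      = cutx G x U - lam * ∑ a ∈ K.arcs, (if a ∈ outArcs G U then (1:ℝ) else 0) := by
  have hfin : (outArcs G U).Finite := Set.toFinite _
  unfold cutx
  rw [← hfin.coe_toFinset, finsum_mem_coe_finset, finsum_mem_coe_finset]
  have h1 : ∀ a, (x - lam • K.chi) a = x a - lam * K.chi a := fun a => rfl
  simp only [h1]
  rw [Finset.sum_sub_distrib, ← Finset.mul_sum]
  congr 1
  congr 1
  have h2 : ∑ a ∈ hfin.toFinset, K.chi a
      = ∑ a ∈ hfin.toFinset, (if a ∈ K.arcs then (1:ℝ) else 0) := rfl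
  rw [h2, Finset.sum_ite_mem, Finset.inter_comm, ← Finset.sum_ite_mem]
  apply Finset.sum_congr rfl
  intro a _
  simp [Set.Finite.mem_toFinset]

lemma cuty_add_single (G : SimpleGraph V) (R : Set V) (y : DirFullComp G R → ℝ)
    (K : DirFullComp G R) (lam : ℝ) (U : Set V) :
    cuty G R (y + lam • (Pi.single K 1 : DirFullComp G R → ℝ)) U
      = cuty G R y U + lam * (if K.crosses U then 1 else 0) := by
  have hfin : {K' : DirFullComp G R | K'.crosses U}.Finite := Set.toFinite _
  unfold cuty
  rw [← hfin.coe_toFinset, finsum_mem_coe_finset, finsum_mem_coe_finset]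
  have h1 : ∀ K', (y + lam • (Pi.single K 1 : DirFullComp G R → ℝ)) K'
      = y K' + lam * (Pi.single K 1 : DirFullComp G R → ℝ) K' := fun K' => by
    simp [Pi.add_apply, Pi.smul_apply, smul_eq_mul]
  simp only [h1]
  rw [Finset.sum_add_distrib, ← Finset.mul_sum, Finset.sum_pi_single']
  congr 2
  simp [Set.Finite.mem_toFinset]



lemma mval (hnt : NoTerminalEdges G R) (K : DirFullComp G R) {v u : V}
    (hK : K.IsCentre v) (hv : v ∉ R) (hu : u ∈ R) (hsink : K.sink = u)
    (hadj : G.Adj v u) (U : Set V) :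
    ∑ a ∈ K.arcs, (if a ∈ outArcs G U then (1:ℝ) else 0)
      = (if v ∈ U then 0
          else ((((Set.toFinite K.sources).toFinset.filter (· ∈ U)).card : ℝ)))
        + (if v ∈ U ∧ u ∉ U then 1 else 0) := by
  classical
  have hvu : v ≠ u := fun h => hv (h ▸ hu)
  set Sfin := (Set.toFinite K.sources).toFinset with hSfin
  have harcs : K.arcs = Sfin.image (fun w => (w, v)) ∪ {(v, u)} := by
    ext ⟨a, b⟩
    simp only [Finset.mem_union, Finset.mem_image, Finset.mem_singleton,
      Set.Finite.mem_toFinset, Prod.mk.injEq, arcs_char hnt K hK hv hu hsink a b, hSfin]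
    constructor
    · rintro (⟨h1, hb⟩ | ⟨ha, hb⟩)
      · exact Or.inl ⟨a, h1, rfl, hb.symm⟩
      · exact Or.inr ⟨ha, hb⟩
    · rintro (⟨w, hw, hwa, hvb⟩ | ⟨ha, hb⟩)
      · exact Or.inl ⟨hwa ▸ hw, hvb.symm⟩
      · exact Or.inr ⟨ha, hb⟩
  have hdisj : Disjoint (Sfin.image fun w => (w, v)) ({(v, u)} : Finset (V × V)) := by
    simp only [Finset.disjoint_singleton_right, Finset.mem_image, not_exists]
    rintro w ⟨hw, heq⟩
    exact hvu (congrArg Prod.snd heq)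
  have hinj : ∀ w ∈ Sfin, ∀ w' ∈ Sfin, (w, v) = (w', v) → w = w' :=
    fun w _ w' _ h => congrArg Prod.fst h
  rw [harcs, Finset.sum_union hdisj, Finset.sum_image hinj, Finset.sum_singleton]
  have hterm : ∀ w ∈ Sfin, (if (w, v) ∈ outArcs G U then (1:ℝ) else 0)
      = if w ∈ U ∧ v ∉ U then 1 else 0 := by
    intro w hw
    have hws : w ∈ K.sources := by
      rw [hSfin, Set.Finite.mem_toFinset] at hw; exact hw
    have hadjw : G.Adj w v := ((sources_adj hnt K hK hv hu hsink w hws).1).symm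
    simp [outArcs, Set.mem_setOf_eq, hadjw]
  rw [Finset.sum_congr rfl hterm]
  have h2 : ((v, u) ∈ outArcs G U) ↔ (v ∈ U ∧ u ∉ U) := by
    simp [outArcs, hadj]
  by_cases hvU : v ∈ U
  · simp [hvU, h2]
  · simp only [hvU, not_false_iff, and_true, if_false, if_neg hvU]
    rw [Finset.sum_boole]
    simp [h2, hvU]

end StructLemmas

theorem stmt13
    (G : SimpleGraph V) (R : Set V) (r : V) (hr : r ∈ R)
    (hqb : QuasiBipartite G R) (hnt : NoTerminalEdges G R)
    (x : V × V → ℝ) (y : DirFullComp G R → ℝ) (hxy : memI G R r x y)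
    (v u : V) (hv : v ∉ R) (hu : u ∈ R) (hadj : G.Adj v u)
    (K : DirFullComp G R) (hK : K.IsCentre v) (hsink : K.sink = u) :
    FeasibleComp G R r x y K ↔
      ((∀ a ∈ K.arcs, 0 < x a) ∧
        K.sources ⊆ Cset G R r x y v u ∧
        (∀ X ∈ XStar G R r x y v u, (K.sources ∩ X).Subsingleton) ∧
        (∀ Y ∈ YStar G R r x y v u, (K.sources ∩ Y).Nonempty)) := by
  classical
  obtain ⟨hx0, hy0, hcon⟩ := hxy
  have hvu : v ≠ u := fun h => hv (h ▸ hu)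
  set Sfin : Finset V := (Set.toFinite K.sources).toFinset with hSfin
  have hSmem : ∀ w, w ∈ Sfin ↔ w ∈ K.sources := fun w => Set.Finite.mem_toFinset _
  set m : Set V → ℝ :=
    fun U => ∑ a ∈ K.arcs, (if a ∈ outArcs G U then (1:ℝ) else 0) with hmdef
  set d : Set V → ℝ := fun U => if K.crosses U then 1 else 0 with hddef
  have hmU : ∀ U : Set V, m U = ∑ a ∈ K.arcs, (if a ∈ outArcs G U then (1:ℝ) else 0) :=
    fun U => rfl
  have hdU : ∀ U : Set V, d U = if K.crosses U then (1:ℝ) else 0 := fun U => rfl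
  have hd0 : ∀ U, 0 ≤ d U := by
    intro U; rw [hdU U]; split_ifs <;> norm_num
  have hd1 : ∀ U, d U ≤ 1 := by
    intro U; rw [hdU U]; split_ifs <;> norm_num
  have hmval : ∀ U : Set V, m U
      = (if v ∈ U then 0 else ((Sfin.filter (· ∈ U)).card : ℝ))
        + (if v ∈ U ∧ u ∉ U then 1 else 0) :=
    fun U => mval hnt K hK hv hu hsink hadj U
  have hcross : ∀ U : Set V, K.crosses U ↔ (u ∉ U ∧ (K.sources ∩ U).Nonempty) := by
    intro U
    unfold DirFullComp.crosses
    rw [hsink]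
  have hfiltmem : ∀ (U : Set V) (w : V),
      w ∈ Sfin.filter (· ∈ U) ↔ (w ∈ K.sources ∧ w ∈ U) := by
    intro U w
    simp only [Finset.mem_filter, hSmem]
  -- Step 1
  have step1 : FeasibleComp G R r x y K ↔
      ((∀ a ∈ K.arcs, 0 < x a) ∧
        ∀ U : Set V, TightFor G R r x y U → m U ≤ d U) := by
    constructor
    · rintro ⟨lam, hlam, hx0', hy0', hcon'⟩
      constructor
      · intro a ha
        have h := hx0' a
        have happ : (x - lam • K.chi) a = x a - lam * K.chi a := rfl
        have hchi : K.chi a = 1 := if_pos ha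
        rw [happ, hchi] at h
        linarith
      · intro U hU
        have h := hcon' U hU.1
        rw [cutx_sub_smul, cuty_add_single] at h
        have ht := hU.2
        have hmul : lam * m U ≤ lam * d U := by
          rw [hmU U, hdU U]
          linarith [h, ht]
        exact le_of_mul_le_mul_left hmul hlam
    · rintro ⟨hpos, htight⟩
      set 𝒰 : Finset (Set V) :=
        Finset.univ.filter (fun U => Valid R r U ∧ d U < m U) with h𝒰
      set g : Set V → ℝ :=
        fun U => (cutx G x U + cuty G R y U - 1) / (m U - d U) with hg
      set T : Finset ℝ := insert 1 (K.arcs.image x ∪ 𝒰.image g) with hT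
      have hTne : T.Nonempty := ⟨1, Finset.mem_insert_self 1 _⟩
      have hslack : ∀ U ∈ 𝒰, 0 < cutx G x U + cuty G R y U - 1 ∧ 0 < m U - d U := by
        intro U hU
        rw [h𝒰, Finset.mem_filter] at hU
        obtain ⟨-, hUvalid, hlt⟩ := hU
        have h1 : 1 ≤ cutx G x U + cuty G R y U := hcon U hUvalid
        have hne : cutx G x U + cuty G R y U ≠ 1 := by
          intro heq
          exact absurd (htight U ⟨hUvalid, heq⟩) (not_le.2 hlt)
        constructor
        · rcases lt_or_eq_of_le h1 with h | h
          · linarith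
          · exact absurd h.symm hne
        · linarith
      have hTpos : ∀ t ∈ T, 0 < t := by
        intro t ht
        rw [hT] at ht
        rcases Finset.mem_insert.1 ht with rfl | ht'
        · norm_num
        · rcases Finset.mem_union.1 ht' with h | h
          · obtain ⟨a, ha, rfl⟩ := Finset.mem_image.1 h
            exact hpos a ha
          · obtain ⟨U, hU, rfl⟩ := Finset.mem_image.1 h
            obtain ⟨h1, h2⟩ := hslack U hU
            exact div_pos h1 h2
      set lam := T.min' hTne with hlamdef
      have hlampos : 0 < lam := hTpos _ (T.min'_mem hTne)
      refine ⟨lam, hlampos, ?_, ?_, ?_⟩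
      · intro a
        have happ : (x - lam • K.chi) a = x a - lam * K.chi a := rfl
        rw [happ]
        by_cases ha : a ∈ K.arcs
        · have hchi : K.chi a = 1 := if_pos ha
          have hle : lam ≤ x a := by
            apply Finset.min'_le
            rw [hT]
            exact Finset.mem_insert_of_mem
              (Finset.mem_union_left _ (Finset.mem_image_of_mem x ha))
          rw [hchi]
          linarith
        · have hchi : K.chi a = 0 := if_neg ha
          rw [hchi]
          simpa using hx0 a
      · intro K'
        have happ : (y + lam • (Pi.single K 1 : DirFullComp G R → ℝ)) K'
            = y K' + lam * (Pi.single K 1 : DirFullComp G R → ℝ) K' := rfl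
        rw [happ]
        have : (0:ℝ) ≤ (Pi.single K 1 : DirFullComp G R → ℝ) K' := by
          rw [Pi.single_apply]
          split_ifs <;> norm_num
        have := mul_nonneg hlampos.le this
        linarith [hy0 K']
      · intro U hUvalid
        rw [cutx_sub_smul, cuty_add_single]
        have hbase : 1 ≤ cutx G x U + cuty G R y U := hcon U hUvalid
        by_cases hmd : m U ≤ d U
        · have h2 : lam * m U ≤ lam * d U := mul_le_mul_of_nonneg_left hmd hlampos.le
          rw [hmU U, hdU U] at h2
          linarith
        · push_neg at hmd
          have hUmem : U ∈ 𝒰 := by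
            rw [h𝒰, Finset.mem_filter]
            exact ⟨Finset.mem_univ _, hUvalid, hmd⟩
          have hle : lam ≤ g U := by
            apply Finset.min'_le
            rw [hT]
            exact Finset.mem_insert_of_mem
              (Finset.mem_union_right _ (Finset.mem_image_of_mem g hUmem))
          obtain ⟨hs1, hs2⟩ := hslack U hUmem
          have hmul : lam * (m U - d U) ≤ g U * (m U - d U) :=
            mul_le_mul_of_nonneg_right hle hs2.le
          have hgU : g U * (m U - d U) = cutx G x U + cuty G R y U - 1 := by
            rw [hg]
            exact div_mul_cancel₀ _ (ne_of_gt hs2)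
          rw [hgU] at hmul
          have h3 : lam * m U - lam * d U ≤ cutx G x U + cuty G R y U - 1 := by
            linarith [hmul, mul_sub lam (m U) (d U)]
          rw [hmU U, hdU U] at h3
          linarith
  -- Step 2
  have step2 : (∀ U : Set V, TightFor G R r x y U → m U ≤ d U) ↔
      (K.sources ⊆ Cset G R r x y v u ∧
        (∀ X ∈ XStar G R r x y v u, (K.sources ∩ X).Subsingleton) ∧
        (∀ Y ∈ YStar G R r x y v u, (K.sources ∩ Y).Nonempty)) := by
    constructor
    · intro htight
      have hb : K.sources ⊆ Cset G R r x y v u := by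
        intro w hw
        obtain ⟨hwadj, hwu, hwv⟩ := sources_adj hnt K hK hv hu hsink w hw
        refine ⟨hwadj, hwu, ?_⟩
        rintro ⟨U, hUt, huU, hwU, hvU⟩
        have h := htight U hUt
        rw [hmval U] at h
        have hdU0 : d U = 0 := by
          rw [hdU U, if_neg]
          rw [hcross]
          exact fun hc => hc.1 huU
        rw [hdU0, if_neg hvU, if_neg (fun hc => hvU hc.1), add_zero] at h
        have hcardpos : 0 < (Sfin.filter (· ∈ U)).card :=
          Finset.card_pos.2 ⟨w, (hfiltmem U w).2 ⟨hw, hwU⟩⟩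
        have : (0:ℝ) < ((Sfin.filter (· ∈ U)).card : ℝ) := by exact_mod_cast hcardpos
        linarith
      refine ⟨hb, ?_, ?_⟩
      · rintro Xs ⟨⟨X, hXt, huX, hvX, rfl⟩, -⟩
        intro w1 hw1 w2 hw2
        have h := htight X hXt
        rw [hmval X, if_neg hvX, if_neg (fun hc => hvX hc.1), add_zero] at h
        have hcard : ((Sfin.filter (· ∈ X)).card : ℝ) ≤ 1 := le_trans h (hd1 X)
        have hcard' : (Sfin.filter (· ∈ X)).card ≤ 1 := by exact_mod_cast hcard
        have hmem1 : w1 ∈ Sfin.filter (· ∈ X) :=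
          (hfiltmem X w1).2 ⟨hw1.1, hw1.2.1⟩
        have hmem2 : w2 ∈ Sfin.filter (· ∈ X) :=
          (hfiltmem X w2).2 ⟨hw2.1, hw2.2.1⟩
        exact Finset.card_le_one.1 hcard' w1 hmem1 w2 hmem2
      · rintro Ys ⟨⟨Y, hYt, hvY, huY, rfl⟩, -⟩
        have h := htight Y hYt
        rw [hmval Y, if_pos hvY, if_pos ⟨hvY, huY⟩, zero_add] at h
        have hcr : K.crosses Y := by
          by_contra hcr
          rw [hdU Y, if_neg hcr] at h
          linarith
        obtain ⟨-, w, hwS, hwY⟩ := (hcross Y).1 hcr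
        exact ⟨w, hwS, hwY, hb hwS⟩
    · rintro ⟨hb, hc, hd'⟩ U hUt
      rw [hmval U]
      by_cases hvU : v ∈ U
      · by_cases huU : u ∈ U
        · rw [if_pos hvU, if_neg (fun hc' => hc'.2 huU), add_zero]
          exact hd0 U
        · rw [if_pos hvU, if_pos ⟨hvU, huU⟩, zero_add]
          have hYmem : U ∩ Cset G R r x y v u ∈ Yfam G R r x y v u :=
            ⟨U, hUt, hvU, huU, rfl⟩
          obtain ⟨M, hMle, hMmin⟩ :=
            Set.Finite.exists_le_minimal (Set.toFinite (Yfam G R r x y v u)) hYmem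
          have hMstar : M ∈ YStar G R r x y v u :=
            ⟨hMmin.1, fun Y' hY' hss => le_antisymm hss (hMmin.2 hY' hss)⟩
          obtain ⟨w, hwS, hwM⟩ := hd' M hMstar
          have hwU : w ∈ U := (hMle hwM).1
          have : K.crosses U := (hcross U).2 ⟨huU, w, hwS, hwU⟩
          rw [hdU U, if_pos this]
      · by_cases huU : u ∈ U
        · have hempty : Sfin.filter (· ∈ U) = ∅ := by
            rw [Finset.filter_eq_empty_iff]
            intro w hw hwU
            have hwS : w ∈ K.sources := (hSmem w).1 hw
            exact (hb hwS).2.2 ⟨U, hUt, huU, hwU, hvU⟩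
          rw [if_neg hvU, if_neg (fun hc' => hvU hc'.1), add_zero, hempty]
          simpa using hd0 U
        · rw [if_neg hvU, if_neg (fun hc' => hvU hc'.1), add_zero]
          rcases Set.eq_empty_or_nonempty (K.sources ∩ U) with hSU | ⟨w, hwS, hwU⟩
          · have hempty : Sfin.filter (· ∈ U) = ∅ := by
              rw [Finset.filter_eq_empty_iff]
              intro w hw hwU
              exact absurd hSU (Set.nonempty_iff_ne_empty.1 ⟨w, (hSmem w).1 hw, hwU⟩)
            rw [hempty]
            simpa using hd0 U
          · have hcr : K.crosses U := (hcross U).2 ⟨huU, w, hwS, hwU⟩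
            have hXmem : U ∩ Cset G R r x y v u ∈ Xfam G R r x y v u :=
              ⟨U, hUt, huU, hvU, rfl⟩
            obtain ⟨M, hMle, hMmax⟩ :=
              (Set.toFinite (Xfam G R r x y v u)).exists_le_maximal hXmem
            have hMstar : M ∈ XStar G R r x y v u :=
              ⟨hMmax.1, fun X' hX' hss => le_antisymm (hMmax.2 hX' hss) hss⟩
            have hsub := hc M hMstar
            have hcard : (Sfin.filter (· ∈ U)).card ≤ 1 := by
              rw [Finset.card_le_one]
              intro a ha b hb'
              obtain ⟨haS, haU⟩ := (hfiltmem U a).1 ha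
              obtain ⟨hbS, hbU⟩ := (hfiltmem U b).1 hb'
              exact hsub ⟨haS, hMle ⟨haU, hb haS⟩⟩ ⟨hbS, hMle ⟨hbU, hb hbS⟩⟩
            have : ((Sfin.filter (· ∈ U)).card : ℝ) ≤ 1 := by exact_mod_cast hcard
            rw [hdU U, if_pos hcr]
            exact this
  rw [step1, step2]
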